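/- Let Φ : C → D be a K-linear functor between Krull-Schmidt categories satisfying: Φ sends indecomposables to indecomposables with local induced endomorphism ring maps, and Φ reflects isomorphy of indecomposables. Then a morphism f in C is a split injection if and only if Φ(f) is a split injection. -/

import Mathlib

open CategoryTheory CategoryTheory.Limits

/-- A (preadditive) category is Krull–Schmidt if every object is a finite direct sum of
objects having local endomorphism rings. -/
def IsKrullSchmidt (C : Type*) [Category C] [Preadditive C] [HasFiniteBiproducts C] : Prop :=
  ∀ X : C, ∃ (n : ℕ) (f : Fin n → C),
    Nonempty (X ≅ ⨁ f) ∧ ∀ j, IsLocalRing (End (f j))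


set_option linter.unusedSectionVars false

section RingAux

lemma KS.isUnit_or_isUnit_of_isUnit_add {R : Type*} [Ring R] [IsLocalRing R] {a b : R}
    (h : IsUnit (a + b)) : IsUnit a ∨ IsUnit b := by
  rcases h with ⟨u, hu⟩
  have h1 : a * ↑u⁻¹ + b * ↑u⁻¹ = 1 := by
    rw [← add_mul, ← hu, Units.mul_inv]
  rcases IsLocalRing.isUnit_or_isUnit_of_add_one h1 with h' | h'
  · left; have := h'.mul u.isUnit; rwa [mul_assoc, Units.inv_mul, mul_one] at this
  · right; have := h'.mul u.isUnit; rwa [mul_assoc, Units.inv_mul, mul_one] at this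

lemma KS.isUnit_or_isUnit_one_sub_self {R : Type*} [Ring R] [IsLocalRing R] (a : R) :
    IsUnit a ∨ IsUnit (1 - a) :=
  KS.isUnit_or_isUnit_of_isUnit_add (by rw [add_sub_cancel]; exact isUnit_one)

lemma KS.of_isUnit_or_isUnit_one_sub_self {R : Type*} [Ring R] [Nontrivial R]
    (h : ∀ a : R, IsUnit a ∨ IsUnit (1 - a)) : IsLocalRing R :=
  ⟨fun {a b} hab => by
    rcases h a with h' | h'
    · exact Or.inl h'
    · right; rwa [show b = 1 - a from by rw [← hab]; exact (add_sub_cancel_left a b).symm] ⟩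

lemma KS.exists_isUnit_of_sum {R : Type*} [Ring R] [IsLocalRing R] {ι : Type*}
    (s : Finset ι) (x : ι → R) (h : IsUnit (∑ j ∈ s, x j)) : ∃ j ∈ s, IsUnit (x j) := by
  classical
  induction s using Finset.induction_on with
  | empty => simp only [Finset.sum_empty] at h; exact absurd h not_isUnit_zero
  | insert _ _ ha ih =>
    rw [Finset.sum_insert ha] at h
    rcases KS.isUnit_or_isUnit_of_isUnit_add h with h' | h'
    · exact ⟨_, Finset.mem_insert_self _ _, h'⟩
    · obtain ⟨j, hj, hj'⟩ := ih h'
      exact ⟨j, Finset.mem_insert_of_mem hj, hj'⟩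

end RingAux

section CatAux
variable {C : Type*} [Category C] [Preadditive C]

/-- Conjugation of endomorphisms along an isomorphism. -/
def KS.conjEnd {X Y : C} (e : X ≅ Y) (b : End Y) : End X :=
  (e.hom ≫ b ≫ e.inv : X ⟶ X)

lemma KS.isUnit_conjEnd_iff {X Y : C} (e : X ≅ Y) (b : End Y) :
    IsUnit (KS.conjEnd e b) ↔ IsUnit b := by
  rw [isUnit_iff_isIso, isUnit_iff_isIso]
  constructor
  · intro hb
    have hb2 : (b : Y ⟶ Y) = e.inv ≫ (KS.conjEnd e b : X ⟶ X) ≫ e.hom := by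
      show b = e.inv ≫ (e.hom ≫ b ≫ e.inv) ≫ e.hom
      simp
    show IsIso (b : Y ⟶ Y)
    rw [hb2]
    infer_instance
  · intro hb
    show IsIso (e.hom ≫ (b : Y ⟶ Y) ≫ e.inv)
    infer_instance

lemma KS.end_sub_eq {Z : C} (b c : End Z) :
    b - c = @HSub.hSub (Z ⟶ Z) (Z ⟶ Z) (Z ⟶ Z) instHSub b c := rfl

lemma KS.conjEnd_one_sub {X Y : C} (e : X ≅ Y) (a : End Y) :
    KS.conjEnd e (1 - a) = 1 - KS.conjEnd e a := by
  simp only [KS.conjEnd, KS.end_sub_eq, End.one_def]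
  simp [Preadditive.sub_comp, Preadditive.comp_sub]

lemma KS.isLocalRing_end_of_iso {X Y : C} (e : X ≅ Y) (h : IsLocalRing (End X)) :
    IsLocalRing (End Y) := by
  have hnt : Nontrivial (End Y) := by
    refine ⟨⟨𝟙 Y, 0, fun h0 => ?_⟩⟩
    have h1 : (1 : End X) ≠ 0 := one_ne_zero
    apply h1
    have h2 : (𝟙 X : X ⟶ X) = e.hom ≫ 𝟙 Y ≫ e.inv := by simp
    show (𝟙 X : X ⟶ X) = 0
    rw [h2, h0]; simp
  refine KS.of_isUnit_or_isUnit_one_sub_self fun a => ?_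
  rcases KS.isUnit_or_isUnit_one_sub_self (KS.conjEnd e a) with h' | h'
  · exact Or.inl ((KS.isUnit_conjEnd_iff e a).mp h')
  · rw [← KS.conjEnd_one_sub] at h'
    exact Or.inr ((KS.isUnit_conjEnd_iff e _).mp h')

end CatAux


lemma KS.eq_one_of_idem_isUnit {R : Type*} [Monoid R] {a : R} (h : a * a = a)
    (hu : IsUnit a) : a = 1 :=
  hu.mul_left_cancel (by rw [h, mul_one])

section CatAux
variable {C : Type*} [Category C] [Preadditive C]

lemma KS.not_isZero_of_nontrivial_end {X : C} (h : Nontrivial (End X)) : ¬ IsZero X := by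
  intro hz
  have : (1 : End X) = 0 := hz.eq_of_src (𝟙 X) 0
  exact one_ne_zero this

lemma KS.isZero_of_id_eq_zero {X : C} (h : (𝟙 X : X ⟶ X) = 0) : IsZero X := by
  rw [IsZero.iff_id_eq_zero]; exact h

lemma KS.indecomposable_of_isLocalRing_end [HasBinaryBiproducts C] {X : C}
    (h : IsLocalRing (End X)) : Indecomposable X := by
  constructor
  · exact KS.not_isZero_of_nontrivial_end inferInstance
  · intro Y Z e
    set a : End X := (e.hom ≫ biprod.fst ≫ biprod.inl ≫ e.inv : X ⟶ X) with ha
    have haa : a * a = a := by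
      rw [End.mul_def]
      show (e.hom ≫ biprod.fst ≫ biprod.inl ≫ e.inv) ≫
        (e.hom ≫ biprod.fst ≫ biprod.inl ≫ e.inv) = e.hom ≫ biprod.fst ≫ biprod.inl ≫ e.inv
      simp
    rcases KS.isUnit_or_isUnit_one_sub_self a with hu | hu
    · -- a = 1, so Z is zero
      have h1 : a = 1 := KS.eq_one_of_idem_isUnit haa hu
      right
      apply KS.isZero_of_id_eq_zero
      have h2 : biprod.fst ≫ biprod.inl = (𝟙 (Y ⊞ Z) : Y ⊞ Z ⟶ Y ⊞ Z) := by
        have h3 : e.inv ≫ (a : X ⟶ X) ≫ e.hom = biprod.fst ≫ biprod.inl := by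
          show e.inv ≫ (e.hom ≫ biprod.fst ≫ biprod.inl ≫ e.inv) ≫ e.hom = _
          simp
        rw [← h3, h1, End.one_def]; simp
      calc (𝟙 Z : Z ⟶ Z) = biprod.inr ≫ 𝟙 (Y ⊞ Z) ≫ biprod.snd := by simp
        _ = biprod.inr ≫ (biprod.fst ≫ biprod.inl) ≫ biprod.snd := by rw [h2]
        _ = 0 := by simp
    · -- 1 - a is a unit and idempotent, hence = 1, so a = 0, Y is zero
      have hid : (1 - a) * (1 - a) = 1 - a := by
        rw [mul_sub, sub_mul, sub_mul, one_mul, one_mul, mul_one, haa]; abel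
      have h1 : (1 : End X) - a = 1 := KS.eq_one_of_idem_isUnit hid hu
      have h0 : a = 0 := by
        have := sub_eq_self.mp h1; exact this
      left
      apply KS.isZero_of_id_eq_zero
      have h2 : biprod.fst ≫ biprod.inl = (0 : Y ⊞ Z ⟶ Y ⊞ Z) := by
        have h3 : e.inv ≫ (a : X ⟶ X) ≫ e.hom = biprod.fst ≫ biprod.inl := by
          show e.inv ≫ (e.hom ≫ biprod.fst ≫ biprod.inl ≫ e.inv) ≫ e.hom = _
          simp
        rw [← h3, h0]
        show e.inv ≫ (0 : X ⟶ X) ≫ e.hom = 0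
        simp
      calc (𝟙 Y : Y ⟶ Y) = biprod.inl ≫ (biprod.fst ≫ biprod.inl) ≫ biprod.fst := by simp
        _ = 0 := by rw [h2]; simp

variable [HasFiniteBiproducts C]

lemma KS.isZero_biproduct_summand {J : Type} [Fintype J] (G : J → C)
    (h : IsZero (⨁ G)) (j : J) : IsZero (G j) := by
  apply KS.isZero_of_id_eq_zero
  have h1 : biproduct.ι G j ≫ biproduct.π G j = 𝟙 (G j) := by simp
  rw [← h1, h.eq_of_tgt (biproduct.ι G j) 0, zero_comp]

/-- A biproduct over `Fin 1` is the single object. -/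
noncomputable def KS.biproductFinOne (F : Fin 1 → C) : ⨁ F ≅ F 0 where
  hom := biproduct.π F 0
  inv := biproduct.ι F 0
  hom_inv_id := by rw [← biproduct.total, Fin.sum_univ_one]
  inv_hom_id := by simp

/-- Splitting off the `σ 0` summand of a finite biproduct, after reindexing by a
permutation `σ`. -/
noncomputable def KS.splitOff [HasBinaryBiproducts C] {n : ℕ} (F : Fin (n+1) → C)
    (σ : Equiv.Perm (Fin (n+1))) :
    ⨁ F ≅ F (σ 0) ⊞ ⨁ (fun k : Fin n => F (σ k.succ)) where
  hom := biprod.lift (biproduct.π F (σ 0)) (biproduct.lift fun k => biproduct.π F (σ k.succ))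
  inv := biprod.desc (biproduct.ι F (σ 0)) (biproduct.desc fun k => biproduct.ι F (σ k.succ))
  hom_inv_id := by
    rw [biprod.lift_desc, biproduct.lift_desc, ← biproduct.total,
      ← Equiv.sum_comp σ (fun j => biproduct.π F j ≫ biproduct.ι F j), Fin.sum_univ_succ]
  inv_hom_id := by
    ext j
    · simp
    · simp [biproduct.ι_π, σ.injective.ne (Fin.succ_ne_zero j).symm]
    · simp [biproduct.ι_π, σ.injective.ne (Fin.succ_ne_zero j)]
    · rename_i l
      by_cases hjl : j = l
      · subst hjl; simp
      · have h1 : σ j.succ ≠ σ l.succ := σ.injective.ne ((Fin.succ_injective n).ne hjl)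
        simp [biproduct.ι_π_ne _ h1, biproduct.ι_π_ne _ hjl]

end CatAux

section A3s
variable {C : Type*} [Category C]

-- IsSplitMono helpers
lemma KS.isSplitMono_of_retraction {X Y : C} (f : X ⟶ Y) (r : Y ⟶ X) (h : f ≫ r = 𝟙 X) :
    IsSplitMono f := IsSplitMono.mk' ⟨r, h⟩

lemma KS.isSplitMono_iso_comp {X' X Y : C} (e : X' ≅ X) (f : X ⟶ Y) (h : IsSplitMono f) :
    IsSplitMono (e.hom ≫ f) :=
  KS.isSplitMono_of_retraction _ (retraction f ≫ e.inv) (by simp)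

lemma KS.isSplitMono_of_iso_comp {X' X Y : C} (e : X' ≅ X) (f : X ⟶ Y)
    (h : IsSplitMono (e.hom ≫ f)) : IsSplitMono f := by
  refine KS.isSplitMono_of_retraction _ (retraction (e.hom ≫ f) ≫ e.hom) ?_
  have h1 : (e.hom ≫ f) ≫ retraction (e.hom ≫ f) = 𝟙 X' := IsSplitMono.id _
  have h2 : f ≫ retraction (e.hom ≫ f) ≫ e.hom
      = e.inv ≫ ((e.hom ≫ f) ≫ retraction (e.hom ≫ f)) ≫ e.hom := by
    simp only [Category.assoc, Iso.inv_hom_id_assoc]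
  rw [h2, h1]; simp

lemma KS.isSplitMono_comp_iso {X Y Y' : C} (f : X ⟶ Y) (e : Y ≅ Y') (h : IsSplitMono f) :
    IsSplitMono (f ≫ e.hom) :=
  KS.isSplitMono_of_retraction _ (e.inv ≫ retraction f) (by simp)

lemma KS.isSplitMono_of_comp_iso {X Y Y' : C} (f : X ⟶ Y) (e : Y ≅ Y')
    (h : IsSplitMono (f ≫ e.hom)) : IsSplitMono f := by
  refine KS.isSplitMono_of_retraction _ (e.hom ≫ retraction (f ≫ e.hom)) ?_
  rw [← Category.assoc]
  exact IsSplitMono.id _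

lemma KS.isSplitMono_map {D : Type*} [Category D] (Φ : C ⥤ D) {X Y : C} (f : X ⟶ Y)
    (h : IsSplitMono f) : IsSplitMono (Φ.map f) :=
  KS.isSplitMono_of_retraction _ (Φ.map (retraction f))
    (by rw [← Φ.map_comp, IsSplitMono.id, Φ.map_id])

lemma KS.isSplitMono_comp {X Y Z : C} (f : X ⟶ Y) (g : Y ⟶ Z) (hf : IsSplitMono f)
    (hg : IsSplitMono g) : IsSplitMono (f ≫ g) :=
  KS.isSplitMono_of_retraction _ (retraction g ≫ retraction f) (by simp)

end A3s

section A3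
variable {C : Type*} [Category C] [Preadditive C]

/-- Shear isomorphism `1 - a` for a square-zero endomorphism `a`. -/
noncomputable def KS.shearIso {P : C} (a : P ⟶ P) (ha : a ≫ a = 0) : P ≅ P where
  hom := 𝟙 P - a
  inv := 𝟙 P + a
  hom_inv_id := by
    simp only [Preadditive.sub_comp, Preadditive.comp_add, Category.id_comp, Category.comp_id, ha]
    abel
  inv_hom_id := by
    simp only [Preadditive.add_comp, Preadditive.comp_sub, Category.id_comp, Category.comp_id, ha]
    abel

/-- Given a one-sided inverse, if the target has local endomorphism ring and the source is
not "trivial", the map is an isomorphism. -/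
lemma KS.isIso_of_retract {P Q : C} (a : P ⟶ Q) (w : Q ⟶ P) (h : a ≫ w = 𝟙 P)
    (hQ : IsLocalRing (End Q)) (hP : Nontrivial (End P)) : IsIso a := by
  set e : End Q := (w ≫ a : Q ⟶ Q) with he
  have hee : e * e = e := by
    rw [End.mul_def]
    show (w ≫ a) ≫ w ≫ a = w ≫ a
    rw [Category.assoc, ← Category.assoc a w a, h, Category.id_comp]
  rcases KS.isUnit_or_isUnit_one_sub_self e with hu | hu
  · have h1 : e = 1 := KS.eq_one_of_idem_isUnit hee hu
    have h2 : w ≫ a = 𝟙 Q := h1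
    exact ⟨w, h, h2⟩
  · exfalso
    have hid : (1 - e) * (1 - e) = 1 - e := by
      rw [mul_sub, sub_mul, sub_mul, one_mul, one_mul, mul_one, hee]; abel
    have h1 : (1 : End Q) - e = 1 := KS.eq_one_of_idem_isUnit hid hu
    have h0 : e = 0 := sub_eq_self.mp h1
    have h2 : w ≫ a = (0 : Q ⟶ Q) := h0
    have h3 : (𝟙 P : P ⟶ P) = 0 := by
      calc (𝟙 P : P ⟶ P) = (a ≫ w) ≫ a ≫ w := by rw [h]; simp
        _ = a ≫ (w ≫ a) ≫ w := by simp
        _ = 0 := by rw [h2]; simp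
    rcases hP with ⟨x, y, hxy⟩
    apply hxy
    calc x = 𝟙 P ≫ x := (Category.id_comp _).symm
      _ = 𝟙 P ≫ y := by rw [h3]; show (0 : P ⟶ P) ≫ x = (0 : P ⟶ P) ≫ y; simp
      _ = y := Category.id_comp _

variable [HasBinaryBiproducts C]

lemma KS.shear_inl {A Q : C} (h : A ⟶ A ⊞ Q) (hfst : h ≫ biprod.fst = 𝟙 A)
    (a : A ⊞ Q ⟶ A ⊞ Q) (ha : a ≫ a = 0)
    (hadef : a = biprod.fst ≫ (h ≫ biprod.snd) ≫ biprod.inr) :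
    h ≫ (KS.shearIso a ha).hom = biprod.inl := by
  have htot : h = biprod.inl + (h ≫ biprod.snd) ≫ biprod.inr := by
    conv_lhs => rw [← Category.comp_id h, ← biprod.total]
    rw [Preadditive.comp_add, ← Category.assoc, ← Category.assoc, hfst, Category.id_comp]
  have h2 : h ≫ a = (h ≫ biprod.snd) ≫ biprod.inr := by
    rw [hadef, ← Category.assoc, hfst, Category.id_comp]
  show h ≫ (𝟙 (A ⊞ Q) - a) = biprod.inl
  rw [Preadditive.comp_sub, Category.comp_id, h2]
  conv_lhs => rw [htot]
  simp [Preadditive.add_comp]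

/-- If the first component of `f₁` composed with an iso to a biproduct is invertible, we can
adjust the iso so that `f₁` becomes the inclusion of the first factor. -/
lemma KS.gamma_of_iso_component {A N P Q : C} (f₁ : A ⟶ N) (γ0 : N ≅ P ⊞ Q)
    (v : A ⟶ P) (hvdef : f₁ ≫ γ0.hom ≫ biprod.fst = v) (hv : IsIso v) :
    ∃ γ : N ≅ A ⊞ Q, f₁ ≫ γ.hom = biprod.inl := by
  have hfst : (f₁ ≫ γ0.hom ≫ biprod.map (inv v) (𝟙 Q)) ≫ biprod.fst = 𝟙 A := by
    calc (f₁ ≫ γ0.hom ≫ biprod.map (inv v) (𝟙 Q)) ≫ biprod.fst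
        = (f₁ ≫ γ0.hom ≫ biprod.fst) ≫ inv v := by simp
      _ = v ≫ inv v := by rw [hvdef]
      _ = 𝟙 A := IsIso.hom_inv_id v
  set h : A ⟶ A ⊞ Q := f₁ ≫ γ0.hom ≫ biprod.map (inv v) (𝟙 Q) with hh
  set a : A ⊞ Q ⟶ A ⊞ Q := biprod.fst ≫ (h ≫ biprod.snd) ≫ biprod.inr with hadef
  have ha : a ≫ a = 0 := by rw [hadef]; simp
  refine ⟨γ0 ≪≫ biprod.mapIso (asIso v).symm (Iso.refl Q) ≪≫ KS.shearIso a ha, ?_⟩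
  have hmap : (biprod.mapIso (asIso v).symm (Iso.refl Q)).hom = biprod.map (inv v) (𝟙 Q) := rfl
  simp only [Iso.trans_hom, hmap]
  have key := KS.shear_inl h hfst a ha hadef
  calc f₁ ≫ γ0.hom ≫ biprod.map (inv v) (𝟙 Q) ≫ (KS.shearIso a ha).hom
      = h ≫ (KS.shearIso a ha).hom := by rw [hh]; simp only [Category.assoc]
    _ = biprod.inl := key

end A3

section A4
variable {C : Type*} [Category C] [Preadditive C] [HasFiniteBiproducts C]

lemma KS.isZero_biproduct_fin_zero (F : Fin 0 → C) : IsZero (⨁ F) := by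
  apply KS.isZero_of_id_eq_zero
  rw [← biproduct.total]
  simp

variable [HasBinaryBiproducts C]

lemma KS.isLocalRing_end_of_indecomposable {X : C} (hX : Indecomposable X) {n : ℕ}
    (F : Fin n → C) (e : X ≅ ⨁ F) (hloc : ∀ j, IsLocalRing (End (F j))) :
    IsLocalRing (End X) := by
  match n, F, e, hloc with
  | 0, F, e, hloc => exact absurd ((KS.isZero_biproduct_fin_zero F).of_iso e) hX.1
  | 1, F, e, hloc =>
    exact KS.isLocalRing_end_of_iso (e ≪≫ KS.biproductFinOne F).symm (hloc 0)
  | (m+2), F, e, hloc =>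
    exfalso
    have e' : X ≅ F 0 ⊞ ⨁ (fun k : Fin (m+1) => F k.succ) :=
      e ≪≫ KS.splitOff F (Equiv.refl _)
    rcases hX.2 _ _ e' with hz | hz
    · have hnt : Nontrivial (End (F 0)) := (hloc 0).toNontrivial
      exact KS.not_isZero_of_nontrivial_end hnt hz
    · have hz1 := KS.isZero_biproduct_summand _ hz 0
      have hnt : Nontrivial (End (F (0 : Fin (m+1)).succ)) := (hloc _).toNontrivial
      exact KS.not_isZero_of_nontrivial_end hnt hz1

lemma KS.isLocalRing_end_of_indecomposable' (hKS : IsKrullSchmidt C) {X : C}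
    (hX : Indecomposable X) : IsLocalRing (End X) := by
  obtain ⟨n, F, ⟨e⟩, hloc⟩ := hKS X
  exact KS.isLocalRing_end_of_indecomposable hX F e hloc

end A4

section A5
variable {C : Type*} [Category C] [Preadditive C]
    [HasFiniteBiproducts C] [HasBinaryBiproducts C]
    {D : Type*} [Category D] [Preadditive D]
    [HasFiniteBiproducts D] [HasBinaryBiproducts D]

/-- Step A: if `M₁` is indecomposable (local `End`) and `Φ.map f₁` is a split mono, then
`N` decomposes as `M₁ ⊞ N'` in such a way that `f₁` becomes the first inclusion. -/
lemma KS.exists_gamma (hC : IsKrullSchmidt C) (hD : IsKrullSchmidt D)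
    (Φ : C ⥤ D) [Φ.Additive]
    (h1 : ∀ X : C, Indecomposable X → Indecomposable (Φ.obj X))
    (h2 : ∀ X : C, Indecomposable X → ∀ e : End X, IsIso (Φ.map e) → IsIso e)
    (h3 : ∀ X Y : C, Indecomposable X → Indecomposable Y →
      (Nonempty (X ≅ Y) ↔ Nonempty (Φ.obj X ≅ Φ.obj Y)))
    {M₁ N : C} (hM₁ : IsLocalRing (End M₁)) (f₁ : M₁ ⟶ N)
    (hs : IsSplitMono (Φ.map f₁)) :
    ∃ (N' : C) (γ : N ≅ M₁ ⊞ N'), f₁ ≫ γ.hom = biprod.inl := by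
  obtain ⟨m, G, ⟨eN⟩, hGloc⟩ := hC N
  have hM₁ind : Indecomposable M₁ := KS.indecomposable_of_isLocalRing_end hM₁
  have hΦM₁loc : IsLocalRing (End (Φ.obj M₁)) :=
    KS.isLocalRing_end_of_indecomposable' hD (h1 _ hM₁ind)
  -- the retraction, transported to the biproduct decomposition of `N`
  have hus : Φ.map (f₁ ≫ eN.hom) ≫ (Φ.map eN.inv ≫ retraction (Φ.map f₁)) = 𝟙 (Φ.obj M₁) := by
    rw [Φ.map_comp]
    simp only [Category.assoc]
    calc Φ.map f₁ ≫ Φ.map eN.hom ≫ Φ.map eN.inv ≫ retraction (Φ.map f₁)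
        = Φ.map f₁ ≫ (Φ.map eN.hom ≫ Φ.map eN.inv) ≫ retraction (Φ.map f₁) := by
          simp only [Category.assoc]
      _ = Φ.map f₁ ≫ retraction (Φ.map f₁) := by
          rw [← Φ.map_comp, Iso.hom_inv_id, Φ.map_id, Category.id_comp]
      _ = 𝟙 (Φ.obj M₁) := IsSplitMono.id _
  -- the family of endomorphisms summing to the identity
  have hsum : ∑ j : Fin m,
      (show End (Φ.obj M₁) from Φ.map ((f₁ ≫ eN.hom) ≫ biproduct.π G j ≫ biproduct.ι G j) ≫
        (Φ.map eN.inv ≫ retraction (Φ.map f₁))) = 1 := by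
    show (∑ j : Fin m,
      (Φ.map ((f₁ ≫ eN.hom) ≫ biproduct.π G j ≫ biproduct.ι G j) ≫
        (Φ.map eN.inv ≫ retraction (Φ.map f₁))) : Φ.obj M₁ ⟶ Φ.obj M₁) = 𝟙 (Φ.obj M₁)
    rw [← Preadditive.sum_comp, ← Φ.map_sum]
    have htot : (∑ j : Fin m, (f₁ ≫ eN.hom) ≫ biproduct.π G j ≫ biproduct.ι G j)
        = f₁ ≫ eN.hom := by
      rw [← Preadditive.comp_sum]
      rw [show (∑ j : Fin m, biproduct.π G j ≫ biproduct.ι G j) = 𝟙 (⨁ G) from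
        biproduct.total]
      rw [Category.comp_id]
    rw [htot, hus]
  have hone : IsUnit (1 : End (Φ.obj M₁)) := isUnit_one
  rw [← hsum] at hone
  obtain ⟨j, -, hj⟩ := KS.exists_isUnit_of_sum Finset.univ _ hone
  rw [isUnit_iff_isIso] at hj
  -- `hj : IsIso` of the composite; factor it
  have hab : Φ.map ((f₁ ≫ eN.hom) ≫ biproduct.π G j ≫ biproduct.ι G j) ≫
      (Φ.map eN.inv ≫ retraction (Φ.map f₁)) =
      Φ.map ((f₁ ≫ eN.hom) ≫ biproduct.π G j) ≫
        (Φ.map (biproduct.ι G j) ≫ Φ.map eN.inv ≫ retraction (Φ.map f₁)) := by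
    rw [show (f₁ ≫ eN.hom) ≫ biproduct.π G j ≫ biproduct.ι G j
      = ((f₁ ≫ eN.hom) ≫ biproduct.π G j) ≫ biproduct.ι G j from by simp only [Category.assoc]]
    rw [Φ.map_comp]
    simp only [Category.assoc]
  have hj' : IsIso (Φ.map ((f₁ ≫ eN.hom) ≫ biproduct.π G j) ≫
      (Φ.map (biproduct.ι G j) ≫ Φ.map eN.inv ≫ retraction (Φ.map f₁))) := by
    rw [← hab]; exact hj
  have hGjind : Indecomposable (G j) := KS.indecomposable_of_isLocalRing_end (hGloc j)
  have hΦGjloc : IsLocalRing (End (Φ.obj (G j))) :=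
    KS.isLocalRing_end_of_indecomposable' hD (h1 _ hGjind)
  -- the component map is an isomorphism after applying Φ
  have hAiso : IsIso (Φ.map ((f₁ ≫ eN.hom) ≫ biproduct.π G j)) := by
    set A := Φ.map ((f₁ ≫ eN.hom) ≫ biproduct.π G j) with hA
    set B := Φ.map (biproduct.ι G j) ≫ Φ.map eN.inv ≫ retraction (Φ.map f₁) with hB
    have hAB : A ≫ B ≫ inv (A ≫ B) = 𝟙 (Φ.obj M₁) := by
      rw [← Category.assoc]; exact IsIso.hom_inv_id _
    exact KS.isIso_of_retract A (B ≫ inv (A ≫ B)) hAB hΦGjloc hΦM₁loc.toNontrivial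
  -- transfer the isomorphism back to C
  obtain ⟨ψ⟩ := (h3 M₁ (G j) hM₁ind hGjind).mpr ⟨asIso (Φ.map ((f₁ ≫ eN.hom) ≫ biproduct.π G j))⟩
  have he0 : IsIso (((f₁ ≫ eN.hom) ≫ biproduct.π G j) ≫ ψ.inv) := by
    apply h2 M₁ hM₁ind
    rw [Φ.map_comp]
    exact IsIso.comp_isIso' hAiso inferInstance
  have hiso : IsIso ((f₁ ≫ eN.hom) ≫ biproduct.π G j) := by
    rw [show (f₁ ≫ eN.hom) ≫ biproduct.π G j
      = (((f₁ ≫ eN.hom) ≫ biproduct.π G j) ≫ ψ.inv) ≫ ψ.hom from by simp]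
    infer_instance
  -- split off the `j`-th summand of `N`
  obtain ⟨m', rfl⟩ : ∃ m', m = m' + 1 := ⟨m - 1, by have := j.pos; omega⟩
  set σ : Equiv.Perm (Fin (m' + 1)) := Equiv.swap 0 j with hσ
  have hswap : σ 0 = j := Equiv.swap_apply_left 0 j
  rw [← hswap] at hiso
  refine ⟨⨁ (fun k : Fin m' => G (σ k.succ)), ?_⟩
  have hv : f₁ ≫ (eN ≪≫ KS.splitOff G σ).hom ≫ biprod.fst
      = (f₁ ≫ eN.hom) ≫ biproduct.π G (σ 0) := by
    simp only [Iso.trans_hom, Category.assoc, KS.splitOff]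
    rw [biprod.lift_fst]
  obtain ⟨γ, hγ⟩ := KS.gamma_of_iso_component f₁ (eN ≪≫ KS.splitOff G σ) _ hv hiso
  exact ⟨γ, hγ⟩

end A5

section A6
variable {C : Type*} [Category C] [Preadditive C]
    [HasFiniteBiproducts C] [HasBinaryBiproducts C]
    {D : Type*} [Category D] [Preadditive D]
    [HasFiniteBiproducts D] [HasBinaryBiproducts D]

lemma KS.main (hC : IsKrullSchmidt C) (hD : IsKrullSchmidt D) (Φ : C ⥤ D) [Φ.Additive]
    (h1 : ∀ X : C, Indecomposable X → Indecomposable (Φ.obj X))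
    (h2 : ∀ X : C, Indecomposable X → ∀ e : End X, IsIso (Φ.map e) → IsIso e)
    (h3 : ∀ X Y : C, Indecomposable X → Indecomposable Y →
      (Nonempty (X ≅ Y) ↔ Nonempty (Φ.obj X ≅ Φ.obj Y))) :
    ∀ (n : ℕ) (M N : C) (f : M ⟶ N) (F : Fin n → C), (M ≅ ⨁ F) →
      (∀ j, IsLocalRing (End (F j))) → IsSplitMono (Φ.map f) → IsSplitMono f := by
  intro n
  induction n with
  | zero =>
    intro M N f F eM hloc _
    have hz : IsZero M := (KS.isZero_biproduct_fin_zero F).of_iso eM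
    exact KS.isSplitMono_of_retraction f 0 (hz.eq_of_src _ _)
  | succ n ih =>
    intro M N f F eM hloc hsplit
    have eM' : M ≅ F 0 ⊞ ⨁ (fun k : Fin n => F k.succ) := eM ≪≫ KS.splitOff F (Equiv.refl _)
    -- it is enough to split `f' = eM'.inv ≫ f`
    suffices hs' : IsSplitMono (eM'.inv ≫ f) by
      have hfe : f = eM'.hom ≫ (eM'.inv ≫ f) := by simp
      rw [hfe]; exact KS.isSplitMono_iso_comp _ _ hs'
    have hsplit' : IsSplitMono (Φ.map (eM'.inv ≫ f)) := by
      refine KS.isSplitMono_of_retraction _ (retraction (Φ.map f) ≫ Φ.map eM'.hom) ?_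
      rw [Φ.map_comp]
      have hid : Φ.map f ≫ retraction (Φ.map f) = 𝟙 _ := IsSplitMono.id _
      rw [Category.assoc, ← Category.assoc (Φ.map f), hid, Category.id_comp, ← Φ.map_comp,
        Iso.inv_hom_id, Φ.map_id]
    set f' : F 0 ⊞ ⨁ (fun k : Fin n => F k.succ) ⟶ N := eM'.inv ≫ f with hf'def
    -- step A applied to the first inclusion
    have hf₁split : IsSplitMono (Φ.map (biprod.inl ≫ f')) := by
      rw [Φ.map_comp]
      refine KS.isSplitMono_comp _ _ ?_ hsplit'
      exact KS.isSplitMono_of_retraction _ (Φ.map biprod.fst)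
        (by rw [← Φ.map_comp, biprod.inl_fst, Φ.map_id])
    obtain ⟨N', γ, hγ⟩ := KS.exists_gamma hC hD Φ h1 h2 h3 (hloc 0) (biprod.inl ≫ f') hf₁split
    have hinlF2 : biprod.inl ≫ (f' ≫ γ.hom) = biprod.inl := by
      rw [← Category.assoc]; exact hγ
    -- row reduction: kill the lower-left entry
    set c : (⨁ fun k : Fin n => F k.succ) ⟶ F 0 := biprod.inr ≫ (f' ≫ γ.hom) ≫ biprod.fst
      with hcdef
    set d : (⨁ fun k : Fin n => F k.succ) ⟶ N' := biprod.inr ≫ (f' ≫ γ.hom) ≫ biprod.snd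
      with hddef
    set aδ : F 0 ⊞ (⨁ fun k : Fin n => F k.succ) ⟶ F 0 ⊞ (⨁ fun k : Fin n => F k.succ) :=
      biprod.snd ≫ c ≫ biprod.inl with haδdef
    have haδ0 : aδ ≫ aδ = 0 := by
      rw [haδdef]
      rw [show (biprod.snd ≫ c ≫ biprod.inl :
          F 0 ⊞ (⨁ fun k : Fin n => F k.succ) ⟶ F 0 ⊞ (⨁ fun k : Fin n => F k.succ)) ≫
          (biprod.snd ≫ c ≫ biprod.inl :
          F 0 ⊞ (⨁ fun k : Fin n => F k.succ) ⟶ F 0 ⊞ (⨁ fun k : Fin n => F k.succ))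
        = biprod.snd ≫ c ≫ (biprod.inl ≫ biprod.snd) ≫ c ≫ biprod.inl from by
          simp only [Category.assoc]]
      rw [biprod.inl_snd]
      simp
    have htot2 : biprod.inr ≫ (f' ≫ γ.hom) = c ≫ biprod.inl + d ≫ biprod.inr := by
      rw [hcdef, hddef]
      conv_lhs => rw [← Category.comp_id (biprod.inr ≫ (f' ≫ γ.hom)), ← biprod.total]
      rw [Preadditive.comp_add]
      simp only [Category.assoc]
    have hδF : (KS.shearIso aδ haδ0).hom ≫ (f' ≫ γ.hom) = biprod.map (𝟙 (F 0)) d := by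
      apply biprod.hom_ext'
      · have hinlsh : biprod.inl ≫ (KS.shearIso aδ haδ0).hom = biprod.inl := by
          show biprod.inl ≫ (𝟙 _ - aδ) = biprod.inl
          rw [Preadditive.comp_sub, Category.comp_id, haδdef, ← Category.assoc, biprod.inl_snd]
          simp
        rw [← Category.assoc, hinlsh, hinlF2, biprod.inl_map, Category.id_comp]
      · have hinrsh : biprod.inr ≫ (KS.shearIso aδ haδ0).hom = biprod.inr - c ≫ biprod.inl := by
          show biprod.inr ≫ (𝟙 _ - aδ) = biprod.inr - c ≫ biprod.inl
          rw [Preadditive.comp_sub, Category.comp_id, haδdef, ← Category.assoc, biprod.inr_snd,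
            Category.id_comp]
        rw [← Category.assoc, hinrsh]
        simp only [Preadditive.sub_comp, Category.assoc]
        rw [hinlF2, htot2, biprod.inr_map]
        abel
    -- Φ.map d is a split mono
    have hmapsplit : IsSplitMono (Φ.map (biprod.map (𝟙 (F 0)) d)) := by
      rw [← hδF, Φ.map_comp, Φ.map_comp]
      refine KS.isSplitMono_iso_comp (Φ.mapIso (KS.shearIso aδ haδ0)) _ ?_
      exact KS.isSplitMono_comp_iso _ (Φ.mapIso γ) hsplit'
    have hdD : IsSplitMono (Φ.map d) := by
      refine KS.isSplitMono_of_retraction _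
        (Φ.map biprod.inr ≫ retraction (Φ.map (biprod.map (𝟙 (F 0)) d)) ≫ Φ.map biprod.snd) ?_
      have hcomm : Φ.map d ≫ Φ.map (biprod.inr : N' ⟶ F 0 ⊞ N')
          = Φ.map (biprod.inr : (⨁ fun k : Fin n => F k.succ) ⟶ _) ≫
            Φ.map (biprod.map (𝟙 (F 0)) d) := by
        rw [← Φ.map_comp, ← Φ.map_comp, biprod.inr_map]
      rw [← Category.assoc, hcomm, Category.assoc, ← Category.assoc (Φ.map (biprod.map _ _)),
        IsSplitMono.id, Category.id_comp, ← Φ.map_comp, biprod.inr_snd, Φ.map_id]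
    -- induction hypothesis
    have hdsplit : IsSplitMono d :=
      ih _ _ d (fun k => F k.succ) (Iso.refl _) (fun k => hloc k.succ) hdD
    have hmap2 : IsSplitMono (biprod.map (𝟙 (F 0)) d) := by
      refine KS.isSplitMono_of_retraction _ (biprod.map (𝟙 (F 0)) (retraction d)) ?_
      apply biprod.hom_ext' <;> simp
    have hfin : f' = (KS.shearIso aδ haδ0).inv ≫ biprod.map (𝟙 (F 0)) d ≫ γ.inv := by
      rw [← hδF]
      simp only [Category.assoc, Iso.hom_inv_id, Category.comp_id]
      rw [← Category.assoc, Iso.inv_hom_id, Category.id_comp]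
    rw [hfin]
    refine KS.isSplitMono_iso_comp (KS.shearIso aδ haδ0).symm _ ?_
    exact KS.isSplitMono_comp_iso _ γ.symm hmap2

end A6

/-- Let `Φ : C ⥤ D` be a `K`-linear functor between Krull–Schmidt
categories such that (i) `Φ` sends indecomposables to indecomposables and the induced map
`End(X) → End(Φ X)` is a local ring homomorphism for every indecomposable `X` (i.e.
`Φ.map e` invertible implies `e` invertible), and (ii) for indecomposable `X, Y`, `X ≅ Y`
iff `Φ X ≅ Φ Y`.  Then `f : M ⟶ N` is a split injection iff `Φ.map f` is. -/
theorem functor_reflects_split_mono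
    {K : Type*} [Field K]
    {C : Type*} [Category C] [Preadditive C] [Linear K C]
    [HasFiniteBiproducts C] [HasBinaryBiproducts C]
    {D : Type*} [Category D] [Preadditive D] [Linear K D]
    [HasFiniteBiproducts D] [HasBinaryBiproducts D]
    (hC : IsKrullSchmidt C) (hD : IsKrullSchmidt D)
    (Φ : C ⥤ D) [Φ.Additive] [Φ.Linear K]
    (h1 : ∀ X : C, Indecomposable X → Indecomposable (Φ.obj X))
    (h2 : ∀ X : C, Indecomposable X → ∀ e : End X, IsIso (Φ.map e) → IsIso e)
    (h3 : ∀ X Y : C, Indecomposable X → Indecomposable Y →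
      (Nonempty (X ≅ Y) ↔ Nonempty (Φ.obj X ≅ Φ.obj Y)))
    {M N : C} (f : M ⟶ N) :
    IsSplitMono f ↔ IsSplitMono (Φ.map f) := by
  constructor
  · intro h
    exact KS.isSplitMono_map Φ f h
  · intro h
    obtain ⟨n, F, ⟨eM⟩, hloc⟩ := hC M
    exact KS.main hC hD Φ h1 h2 h3 n M N f F eM hloc h
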